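/- Let K be an algebraically closed field and n ≥ 2. The ideal (det − 1, Δ_{n-1}) of K[Mat_n] is a prime ideal; equivalently, the image of Δ_{n-1} in K[SL_n] generates a prime ideal. -/

import Mathlib

open MvPolynomial

/-- The determinant of the generic `n × n` matrix in `K[Mat_n] = K[ξ_{ij}]`. -/
noncomputable def genDet (K : Type*) [CommRing K] (n : ℕ) :
    MvPolynomial (Fin n × Fin n) K :=
  Matrix.det (Matrix.of fun i j : Fin n => X (i, j))

/-- The `k`-th principal minor `Δ_k` of the generic `n × n` matrix. -/
noncomputable def genDelta (K : Type*) [CommRing K] (n : ℕ) (k : ℕ) (hk : k ≤ n) :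
    MvPolynomial (Fin n × Fin n) K :=
  Matrix.det (Matrix.of fun i j : Fin k => X (Fin.castLE hk i, Fin.castLE hk j))

/-! ### Auxiliary irreducibility lemma

If `S : B →+* B[X]` is a ring hom with a retraction `T` (`T ∘ S = id`, `T (C a) = a`),
and `S (g - 1) = C g * X - 1` with `g ≠ 0`, then `g - 1` is irreducible. -/

section Abstract

variable {B : Type*} [CommRing B] [IsDomain B]

open Polynomial in
lemma aux_irreducible (S : B →+* Polynomial B) (T : Polynomial B →+* B)
    (hTS : ∀ b, T (S b) = b) (hTC : ∀ a : B, T (Polynomial.C a) = a)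
    (g : B) (hg : g ≠ 0)
    (hSg : S (g - 1) = Polynomial.C g * Polynomial.X - 1) :
    Irreducible (g - 1) := by
  have hdeg : (Polynomial.C g * Polynomial.X - 1 : Polynomial B).natDegree = 1 := by
    have h1 : (Polynomial.C g * Polynomial.X - 1 : Polynomial B)
        = Polynomial.C g * Polynomial.X - Polynomial.C 1 := by simp
    rw [h1, natDegree_sub_C, natDegree_C_mul_X g hg]
  constructor
  · intro h
    have h2 := h.map S
    rw [hSg] at h2
    have := Polynomial.natDegree_eq_zero_of_isUnit h2
    omega
  · intro u v huv
    have hSuv : S u * S v = Polynomial.C g * Polynomial.X - 1 := by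
      rw [← map_mul, ← huv, hSg]
    have hne : (Polynomial.C g * Polynomial.X - 1 : Polynomial B) ≠ 0 := by
      intro h; rw [h] at hdeg; simp at hdeg
    have hu0 : S u ≠ 0 := by intro h; exact hne (by rw [← hSuv, h, zero_mul])
    have hv0 : S v ≠ 0 := by intro h; exact hne (by rw [← hSuv, h, mul_zero])
    have hadd : (S u).natDegree + (S v).natDegree = 1 := by
      rw [← Polynomial.natDegree_mul hu0 hv0, hSuv, hdeg]
    have hc0 : (S u).coeff 0 * (S v).coeff 0 = -1 := by
      have h3 := congrArg (fun p => Polynomial.coeff p 0) hSuv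
      simpa [Polynomial.mul_coeff_zero] using h3
    rcases Nat.eq_zero_or_pos (S u).natDegree with h0 | h0
    · obtain ⟨a, ha⟩ := Polynomial.natDegree_eq_zero.mp h0
      have hua : u = a := by rw [← hTS u, ← ha, hTC]
      have ha0 : (S u).coeff 0 = a := by rw [← ha, Polynomial.coeff_C_zero]
      left
      rw [hua]
      exact IsUnit.of_mul_eq_one (-(S v).coeff 0)
        (by rw [mul_neg, ← ha0, hc0, neg_neg])
    · have h0' : (S v).natDegree = 0 := by omega
      obtain ⟨a, ha⟩ := Polynomial.natDegree_eq_zero.mp h0'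
      have hva : v = a := by rw [← hTS v, ← ha, hTC]
      have ha0 : (S v).coeff 0 = a := by rw [← ha, Polynomial.coeff_C_zero]
      right
      rw [hva]
      exact IsUnit.of_mul_eq_one (-(S u).coeff 0)
        (by rw [mul_neg, mul_comm, ← ha0, hc0, neg_neg])

end Abstract

noncomputable section Setup

variable (K : Type*) [Field K] (m : ℕ)

/-- The corner index `(n-1, n-1)` for `n = m+2`. -/
def cI : Fin (m + 2) × Fin (m + 2) := (Fin.last (m + 1), Fin.last (m + 1))

/-- The generic matrix with corner entry set to `0`, over the polynomial ring in the
remaining variables. -/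
def Nm : Matrix (Fin (m + 2)) (Fin (m + 2))
    (MvPolynomial {p : Fin (m + 2) × Fin (m + 2) // p ≠ cI m} K) :=
  Matrix.of fun i j => if h : (i, j) = cI m then 0 else X ⟨(i, j), h⟩

/-- `g' = det` of the generic matrix with corner zeroed. -/
def gB : MvPolynomial {p : Fin (m + 2) × Fin (m + 2) // p ≠ cI m} K := (Nm K m).det

lemma gB_ne_zero : gB K m ≠ 0 := by
  set τ : Equiv.Perm (Fin (m + 2)) :=
    Equiv.swap (Fin.last (m + 1)) ⟨m, by omega⟩ with hτdef
  have hne : (Fin.last (m + 1) : Fin (m + 2)) ≠ ⟨m, by omega⟩ := by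
    simp [Fin.ext_iff, Fin.last]
  have hτlast : τ (Fin.last (m + 1)) ≠ Fin.last (m + 1) := by
    rw [hτdef, Equiv.swap_apply_left]
    exact fun h => hne h.symm
  intro h0
  have hmap : (Nm K m).map (MvPolynomial.eval
      (fun q : {p : Fin (m + 2) × Fin (m + 2) // p ≠ cI m} =>
        (τ.permMatrix K) q.1.1 q.1.2)) = τ.permMatrix K := by
    ext i j
    simp only [Nm, Matrix.map_apply, Matrix.of_apply]
    split_ifs with h
    · have hi : i = Fin.last (m + 1) := congrArg Prod.fst h
      have hj : j = Fin.last (m + 1) := congrArg Prod.snd h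
      subst hi; subst hj
      simp only [Equiv.Perm.permMatrix, PEquiv.toMatrix_apply, Equiv.toPEquiv_apply,
        Option.mem_def, Option.some.injEq]
      rw [if_neg (fun hh => hτlast hh)]
      simp
    · simp [eval_X]
  have hev : MvPolynomial.eval
      (fun q : {p : Fin (m + 2) × Fin (m + 2) // p ≠ cI m} =>
        (τ.permMatrix K) q.1.1 q.1.2) (gB K m) = (-1 : K) := by
    rw [gB, RingHom.map_det, RingHom.mapMatrix_apply, hmap, Matrix.det_permutation,
      hτdef, Equiv.Perm.sign_swap hne]
    simp
  rw [h0, map_zero] at hev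
  norm_num at hev

/-- The "scale row 0 by `t`" substitution `B → B[t]`. -/
def Sh : MvPolynomial {p : Fin (m + 2) × Fin (m + 2) // p ≠ cI m} K →ₐ[K]
    Polynomial (MvPolynomial {p : Fin (m + 2) × Fin (m + 2) // p ≠ cI m} K) :=
  aeval fun q => if q.1.1 = (0 : Fin (m + 2)) then Polynomial.C (X q) * Polynomial.X
    else Polynomial.C (X q)

lemma Sh_retract (b : MvPolynomial {p : Fin (m + 2) × Fin (m + 2) // p ≠ cI m} K) :
    Polynomial.evalRingHom 1 (Sh K m b) = b := by
  have h : (Polynomial.evalRingHom 1).comp (Sh K m).toRingHom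
      = RingHom.id (MvPolynomial {p : Fin (m + 2) × Fin (m + 2) // p ≠ cI m} K) := by
    apply MvPolynomial.ringHom_ext
    · intro r
      simp [Sh, MvPolynomial.algebraMap_eq, Polynomial.algebraMap_apply]
    · intro q
      simp only [RingHom.comp_apply, AlgHom.toRingHom_eq_coe, RingHom.coe_coe, Sh, aeval_X,
        RingHom.id_apply]
      split_ifs <;> simp
  exact RingHom.congr_fun h b

lemma Sh_gB : Sh K m (gB K m) = Polynomial.C (gB K m) * Polynomial.X := by
  have hrow : ∀ j : Fin (m + 2), ((0 : Fin (m + 2)), j) ≠ cI m := by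
    intro j h
    have h0 : (0 : Fin (m + 2)) = Fin.last (m + 1) := congrArg Prod.fst h
    exact absurd (congrArg Fin.val h0) (by simp [Fin.last])
  have h1 : (Nm K m).map (Sh K m) =
      Matrix.updateRow ((Nm K m).map Polynomial.C) 0
        ((Polynomial.X : Polynomial (MvPolynomial {p : Fin (m + 2) × Fin (m + 2) // p ≠ cI m} K)) •
          ((Nm K m).map Polynomial.C) 0) := by
    refine Matrix.ext fun i j => ?_
    by_cases hi : i = (0 : Fin (m + 2))
    · subst hi
      rw [Matrix.updateRow_self]
      simp only [Nm, Matrix.map_apply, Matrix.of_apply, dif_neg (hrow j), Pi.smul_apply,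
        smul_eq_mul, Sh, aeval_X]
      rw [if_pos trivial, mul_comm]
    · rw [Matrix.updateRow_ne hi]
      simp only [Nm, Matrix.map_apply, Matrix.of_apply]
      split_ifs with h
      · simp [Sh]
      · simp only [Sh, aeval_X]
        rw [if_neg (by exact fun hh => hi hh)]
  calc Sh K m (gB K m) = ((Nm K m).map (Sh K m)).det := by
        rw [gB, AlgHom.map_det, AlgHom.mapMatrix_apply]
    _ = Polynomial.X * ((Nm K m).map Polynomial.C).det := by
        rw [h1, Matrix.det_updateRow_smul, Matrix.updateRow_eq_self]
    _ = Polynomial.C (gB K m) * Polynomial.X := by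
        rw [gB, RingHom.map_det, RingHom.mapMatrix_apply, mul_comm]

lemma prime_gB_sub_one : Prime (gB K m - 1) := by
  rw [← UniqueFactorizationMonoid.irreducible_iff_prime]
  exact aux_irreducible (Sh K m).toRingHom (Polynomial.evalRingHom 1)
    (Sh_retract K m) (fun a => by simp)
    (gB K m) (gB_ne_zero K m)
    (by simp only [AlgHom.toRingHom_eq_coe, RingHom.coe_coe, map_sub, map_one, Sh_gB])

/-- The isomorphism `K[Mat_n] ≃ B[t]` singling out the corner variable. -/
def EE : MvPolynomial (Fin (m + 2) × Fin (m + 2)) K ≃ₐ[K]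
    Polynomial (MvPolynomial {p : Fin (m + 2) × Fin (m + 2) // p ≠ cI m} K) :=
  (renameEquiv K (Equiv.optionSubtypeNe (cI m)).symm).trans (optionEquivLeft K _)

lemma EE_X_c : EE K m (X (cI m)) = Polynomial.X := by
  simp [EE, Equiv.optionSubtypeNe_symm_self, optionEquivLeft_X_none]

lemma EE_X_ne (p : Fin (m + 2) × Fin (m + 2)) (h : p ≠ cI m) :
    EE K m (X p) = Polynomial.C (X ⟨p, h⟩) := by
  simp [EE, Equiv.optionSubtypeNe_symm_of_ne h, optionEquivLeft_X_some]

/-- The projection `K[Mat_n] → B` killing the corner variable. -/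
def piH : MvPolynomial (Fin (m + 2) × Fin (m + 2)) K →+*
    MvPolynomial {p : Fin (m + 2) × Fin (m + 2) // p ≠ cI m} K :=
  (Polynomial.evalRingHom 0).comp (EE K m).toAlgHom.toRingHom

lemma piH_X (p : Fin (m + 2) × Fin (m + 2)) :
    piH K m (X p) = if h : p = cI m then 0 else X ⟨p, h⟩ := by
  split_ifs with h
  · subst h
    simp [piH, EE_X_c]
  · simp [piH, EE_X_ne K m p h]

lemma piH_surj : Function.Surjective (piH K m) := by
  intro b
  exact ⟨(EE K m).symm (Polynomial.C b), by simp [piH]⟩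

lemma ker_piH : RingHom.ker (piH K m) = Ideal.span {X (cI m)} := by
  rw [piH, ← RingHom.comap_ker, Polynomial.ker_evalRingHom]
  have h0 : ({Polynomial.X - Polynomial.C 0} :
      Set (Polynomial (MvPolynomial {p : Fin (m + 2) × Fin (m + 2) // p ≠ cI m} K)))
      = {Polynomial.X} := by
    rw [map_zero, sub_zero]
  rw [h0]
  have h1 : Ideal.map (EE K m).toAlgHom.toRingHom (Ideal.span {X (cI m)})
      = Ideal.span {Polynomial.X} := by
    rw [Ideal.map_span, Set.image_singleton]
    congr 1
    rw [show ((EE K m).toAlgHom.toRingHom) (X (cI m)) = EE K m (X (cI m)) from rfl, EE_X_c]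
  rw [← h1]
  exact Ideal.comap_map_of_bijective _ (EE K m).bijective

lemma piH_genDet : piH K m (genDet K (m + 2)) = gB K m := by
  rw [genDet, gB, RingHom.map_det, RingHom.mapMatrix_apply]
  congr 1
  refine Matrix.ext fun i j => ?_
  simp only [Matrix.map_apply, Matrix.of_apply, Nm, piH_X]

lemma J_isPrime : (Ideal.span {genDet K (m + 2) - 1, X (cI m)}).IsPrime := by
  haveI hp : (Ideal.span {gB K m - 1}).IsPrime :=
    (Ideal.span_singleton_prime (prime_gB_sub_one K m).ne_zero).mpr (prime_gB_sub_one K m)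
  have hker : Ideal.span {genDet K (m + 2) - 1, X (cI m)} =
      RingHom.ker ((Ideal.Quotient.mk (Ideal.span {gB K m - 1})).comp (piH K m)) := by
    rw [← RingHom.comap_ker, Ideal.mk_ker]
    have h2 : Ideal.span {gB K m - 1} =
        Ideal.map (piH K m) (Ideal.span {genDet K (m + 2) - 1}) := by
      rw [Ideal.map_span, Set.image_singleton, map_sub, map_one, piH_genDet]
    rw [h2, Ideal.comap_map_of_surjective _ (piH_surj K m), ← RingHom.ker_eq_comap_bot, ker_piH]
    exact Ideal.span_insert _ _
  rw [hker]
  exact RingHom.ker_isPrime _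

/-- The generic matrix over `K[Mat_n]`. -/
def Mg : Matrix (Fin (m + 2)) (Fin (m + 2)) (MvPolynomial (Fin (m + 2) × Fin (m + 2)) K) :=
  Matrix.of fun i j => X (i, j)

lemma adj_last :
    (Mg K m).adjugate (Fin.last (m + 1)) (Fin.last (m + 1))
      = genDelta K (m + 2) (m + 1) (by omega) := by
  have hsub : ∀ r : Fin (m + 2) → MvPolynomial (Fin (m + 2) × Fin (m + 2)) K,
      (((Mg K m).updateRow (Fin.last (m + 1)) r).submatrix
        (Fin.last (m + 1)).succAbove (Fin.last (m + 1)).succAbove).det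
      = genDelta K (m + 2) (m + 1) (by omega) := by
    intro r
    rw [genDelta]
    congr 1
    refine Matrix.ext fun i j => ?_
    rw [Matrix.submatrix_apply, Fin.succAbove_last,
      Matrix.updateRow_ne (Fin.castSucc_lt_last i).ne]
    rfl
  rw [Matrix.adjugate_apply, Matrix.det_succ_row _ (Fin.last (m + 1))]
  rw [Finset.sum_eq_single (Fin.last (m + 1))]
  · simp only [Matrix.updateRow_self, Pi.single_eq_same, mul_one]
    rw [hsub]
    have hpow : ((-1 : MvPolynomial (Fin (m + 2) × Fin (m + 2)) K)) ^
        ((Fin.last (m + 1) : ℕ) + (Fin.last (m + 1) : ℕ)) = 1 :=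
      Even.neg_one_pow ⟨m + 1, by simp [Fin.last]⟩
    rw [hpow, one_mul]
  · intro b _ hb
    simp [Matrix.updateRow_self, Pi.single_eq_of_ne hb]
  · intro h
    simp at h

end Setup

/-- for an algebraically closed field `K` and `n ≥ 2`, the ideal
`(det - 1, Δ_{n-1})` of `K[Mat_n]` is prime. -/
theorem stmt3 (K : Type*) [Field K] [IsAlgClosed K] (n : ℕ) (hn : 2 ≤ n) :
    (Ideal.span {genDet K n - 1, genDelta K n (n - 1) (by omega)}).IsPrime := by
  obtain ⟨m, rfl⟩ : ∃ m, n = m + 2 := ⟨n - 2, by omega⟩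
  have hΔ : genDelta K (m + 2) (m + 2 - 1) (by omega)
      = genDelta K (m + 2) (m + 1) (by omega) := rfl
  rw [hΔ]
  let φ : MvPolynomial (Fin (m + 2) × Fin (m + 2)) K →ₐ[K]
      MvPolynomial (Fin (m + 2) × Fin (m + 2)) K :=
    aeval fun p => (Mg K m).adjugate p.1 p.2
  set I : Ideal (MvPolynomial (Fin (m + 2) × Fin (m + 2)) K) :=
    Ideal.span {genDet K (m + 2) - 1, genDelta K (m + 2) (m + 1) (by omega)} with hI
  set J : Ideal (MvPolynomial (Fin (m + 2) × Fin (m + 2)) K) :=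
    Ideal.span {genDet K (m + 2) - 1, X (cI m)} with hJ
  have hdetI : genDet K (m + 2) - 1 ∈ I := Ideal.subset_span (Set.mem_insert _ _)
  have hdetJ : genDet K (m + 2) - 1 ∈ J := Ideal.subset_span (Set.mem_insert _ _)
  have hXJ : X (cI m) ∈ J := Ideal.subset_span (Set.mem_insert_of_mem _ rfl)
  have hΔI : genDelta K (m + 2) (m + 1) (by omega) ∈ I :=
    Ideal.subset_span (Set.mem_insert_of_mem _ rfl)
  have hmap : (Mg K m).map φ = (Mg K m).adjugate := by
    refine Matrix.ext fun i j => ?_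
    simp [Mg, φ, aeval_X]
  have hφdet : φ (genDet K (m + 2)) = genDet K (m + 2) ^ (m + 1) := by
    rw [genDet, show (Matrix.of fun i j : Fin (m + 2) => X (i, j) :
        Matrix _ _ (MvPolynomial (Fin (m + 2) × Fin (m + 2)) K)) = Mg K m from rfl,
      AlgHom.map_det, AlgHom.mapMatrix_apply, hmap, Matrix.det_adjugate]
    simp [genDet, Mg]
  have hφX : ∀ p : Fin (m + 2) × Fin (m + 2), φ (X p) = (Mg K m).adjugate p.1 p.2 :=
    fun p => aeval_X _ p
  have hφφ : ∀ p : Fin (m + 2) × Fin (m + 2),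
      φ (φ (X p)) = genDet K (m + 2) ^ m * X p := by
    intro p
    rw [hφX]
    have h2 : φ.mapMatrix ((Mg K m).adjugate) = ((Mg K m).adjugate).adjugate := by
      rw [AlgHom.map_adjugate, AlgHom.mapMatrix_apply, hmap]
    have h3 : φ ((Mg K m).adjugate p.1 p.2) = ((Mg K m).adjugate).adjugate p.1 p.2 := by
      rw [← h2]; rfl
    rw [h3, Matrix.adjugate_adjugate _ (by simp : Fintype.card (Fin (m + 2)) ≠ 1)]
    simp only [Matrix.smul_apply, smul_eq_mul, Fintype.card_fin]
    rw [show m + 2 - 2 = m from rfl]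
    rfl
  have hXc : φ (X (cI m)) = (Mg K m).adjugate (Fin.last (m + 1)) (Fin.last (m + 1)) := by
    rw [hφX]
    rfl
  have hdet1 : Ideal.Quotient.mk I (genDet K (m + 2)) = 1 := by
    rw [← map_one (Ideal.Quotient.mk I)]
    exact Ideal.Quotient.eq.mpr hdetI
  have key : ∀ q, Ideal.Quotient.mk I (φ (φ q)) = Ideal.Quotient.mk I q := by
    have hhom : (Ideal.Quotient.mkₐ K I).comp (φ.comp φ) = Ideal.Quotient.mkₐ K I := by
      apply MvPolynomial.algHom_ext
      intro p
      simp only [AlgHom.comp_apply, Ideal.Quotient.mkₐ_eq_mk]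
      rw [hφφ p, map_mul, map_pow, hdet1, one_pow, one_mul]
    intro q
    have h4 := DFunLike.congr_fun hhom q
    simpa [Ideal.Quotient.mkₐ_eq_mk] using h4
  obtain ⟨w, hw⟩ : genDet K (m + 2) - 1 ∣ genDet K (m + 2) ^ (m + 1) - 1 := by
    simpa using sub_dvd_pow_sub_pow (genDet K (m + 2)) 1 (m + 1)
  have hIJcomap : I = Ideal.comap φ J := by
    apply le_antisymm
    · rw [hI, Ideal.span_le]
      rintro x hx
      simp only [Set.mem_insert_iff, Set.mem_singleton_iff] at hx
      rcases hx with rfl | rfl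
      · show φ _ ∈ J
        rw [map_sub, map_one, hφdet, hw]
        exact Ideal.mul_mem_right _ _ hdetJ
      · show φ _ ∈ J
        rw [← adj_last K m, ← hXc, hφφ (cI m)]
        exact Ideal.mul_mem_left _ _ hXJ
    · intro p hp
      rw [Ideal.mem_comap] at hp
      have h1 : φ (φ p) ∈ Ideal.map φ J := Ideal.mem_map_of_mem _ hp
      have h2 : Ideal.map φ J ≤ I := by
        rw [hJ, Ideal.map_span, Ideal.span_le]
        rintro x hx
        simp only [Set.image_insert_eq, Set.image_singleton, Set.mem_insert_iff,
          Set.mem_singleton_iff] at hx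
        rcases hx with rfl | rfl
        · rw [map_sub, map_one, hφdet, hw]
          exact Ideal.mul_mem_right _ _ hdetI
        · rw [hXc, adj_last K m]
          exact hΔI
      have h3 : φ (φ p) - p ∈ I := Ideal.Quotient.eq.mp (key p)
      have h5 := I.sub_mem (h2 h1) h3
      simpa using h5
  rw [hIJcomap]
  haveI := J_isPrime K m
  exact Ideal.IsPrime.comap _
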